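/- arXiv:1212.5798 — 4 statements merged into one kernel-verified Lean document; each statement's English description precedes it below -/
import Mathlib

section
/- Let X be a Banach space, S : [0,∞) → B(X) with ‖S(t)‖ ≤ CM/(1+|ω|t^α) for C,M > 0, ω < 0, α ∈ (1,2), let k ∈ L¹([0,∞)), and let f : ℝ × X × X → X satisfy the Lipschitz condition ‖f(t,u,φ) - f(t,v,ψ)‖ ≤ L_f(‖u-v‖ + ‖φ-ψ‖). Define F on bounded continuous functions u : ℝ → X by (Fu)(t) = ∫_{-∞}^t S(t-s) f(s, u(s), (Ku)(s)) ds where (Ku)(t) = ∫_{-∞}^t k(t-s)u(s)ds. Then for all bounded continuous u, v: sup_t ‖(Fu)(t)-(Fv)(t)‖ ≤ Λ · sup_t ‖u(t)-v(t)‖, where Λ = CM|ω|^{-1/α}π/(α sin(π/α)) · L_f (1 + ‖k‖_{L¹}). -/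
open MeasureTheory Set

-- Beta step: ∫ x in Ioo 0 1, x^(b-1) (1-x)^(-b) = Γ(b) Γ(1-b)
lemma beta_step {b : ℝ} (hb0 : 0 < b) (hb1 : b < 1) :
    ∫ x in Ioo (0:ℝ) 1, x ^ (b - 1) * (1 - x) ^ (-b) =
      Real.Gamma b * Real.Gamma (1 - b) := by
  have h1 : Complex.Gamma b * Complex.Gamma (1 - (b:ℂ)) =
      Complex.Gamma (b + (1 - (b:ℂ))) * Complex.betaIntegral b (1 - (b:ℂ)) := by
    apply Complex.Gamma_mul_Gamma_eq_betaIntegral <;> simp [hb0, hb1]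
  rw [add_sub_cancel, Complex.Gamma_one, one_mul] at h1
  have h2 : Complex.betaIntegral b (1 - (b:ℂ)) =
      ((∫ x in Ioo (0:ℝ) 1, x ^ (b - 1) * (1 - x) ^ (-b) : ℝ) : ℂ) := by
    rw [Complex.betaIntegral, intervalIntegral.integral_of_le (by norm_num : (0:ℝ) ≤ 1),
      integral_Ioc_eq_integral_Ioo]
    have : ∀ x ∈ Ioo (0:ℝ) 1, (x:ℂ) ^ ((b:ℂ) - 1) * (1 - (x:ℂ)) ^ (1 - (b:ℂ) - 1) =
        ((x ^ (b - 1) * (1 - x) ^ (-b) : ℝ) : ℂ) := by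
      intro x hx
      obtain ⟨hx0, hx1⟩ := hx
      rw [show ((b:ℂ) - 1) = ((b - 1 : ℝ) : ℂ) by push_cast; ring,
        show (1 - (b:ℂ) - 1) = ((-b : ℝ) : ℂ) by push_cast; ring,
        show (1 - (x:ℂ)) = ((1 - x : ℝ) : ℂ) by push_cast; ring,
        ← Complex.ofReal_cpow hx0.le, ← Complex.ofReal_cpow (by linarith : (0:ℝ) ≤ 1 - x),
        ← Complex.ofReal_mul]
    rw [setIntegral_congr_fun measurableSet_Ioo this]
    exact integral_ofReal
  rw [h2, show ((1:ℂ) - (b:ℂ)) = ((1 - b : ℝ) : ℂ) by push_cast; ring, Complex.Gamma_ofReal,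
    Complex.Gamma_ofReal, ← Complex.ofReal_mul] at h1
  exact_mod_cast h1.symm

lemma mellin_step {b : ℝ} (hb0 : 0 < b) (hb1 : b < 1) :
    ∫ y in Ioi (0:ℝ), y ^ (b - 1) * (1 + y)⁻¹ = Real.pi / Real.sin (Real.pi * b) := by
  have himg : (fun x : ℝ => x / (1 - x)) '' Ioo 0 1 = Ioi 0 := by
    ext y
    constructor
    · rintro ⟨x, ⟨hx0, hx1⟩, rfl⟩
      exact div_pos hx0 (by linarith)
    · intro hy
      refine ⟨y / (1 + y), ⟨div_pos hy (by linarith [mem_Ioi.mp hy]), ?_⟩, ?_⟩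
      · rw [div_lt_one (by linarith [mem_Ioi.mp hy])]; linarith [mem_Ioi.mp hy]
      · have h1y : (1:ℝ) + y ≠ 0 := by have := mem_Ioi.mp hy; positivity
        field_simp
        ring
  have hderiv : ∀ x ∈ Ioo (0:ℝ) 1, HasDerivWithinAt (fun x : ℝ => x / (1 - x))
      (((1 - x) ^ 2)⁻¹) (Ioo 0 1) x := by
    intro x ⟨hx0, hx1⟩
    have h1x : (1:ℝ) - x ≠ 0 := by linarith
    have := (hasDerivAt_id x).div ((hasDerivAt_const x (1:ℝ)).sub (hasDerivAt_id x)) h1x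
    convert this.hasDerivWithinAt using 1
    · rfl
    · rfl
    · rfl
    · simp only [Pi.sub_apply, id]
      field_simp
      ring
  have hinj : InjOn (fun x : ℝ => x / (1 - x)) (Ioo 0 1) := by
    rintro x ⟨hx0, hx1⟩ y ⟨hy0, hy1⟩ h
    have h1x : (1:ℝ) - x ≠ 0 := by linarith
    have h1y : (1:ℝ) - y ≠ 0 := by linarith
    field_simp at h
    linarith
  have := integral_image_eq_integral_abs_deriv_smul measurableSet_Ioo hderiv hinj
    (fun y : ℝ => y ^ (b - 1) * (1 + y)⁻¹)
  rw [himg] at this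
  rw [this]
  have : ∀ x ∈ Ioo (0:ℝ) 1, |((1 - x) ^ 2)⁻¹| •
      ((x / (1 - x)) ^ (b - 1) * (1 + x / (1 - x))⁻¹) = x ^ (b - 1) * (1 - x) ^ (-b) := by
    intro x ⟨hx0, hx1⟩
    have h1x : (0:ℝ) < 1 - x := by linarith
    have e1 : (1:ℝ) + x / (1 - x) = (1 - x)⁻¹ := by field_simp; ring
    have h2 : ((1 - x) ^ 2 : ℝ) = (1 - x) ^ ((2:ℝ)) := by
      rw [← Real.rpow_natCast (1 - x) 2]; norm_num
    have hne1 : ((1 - x) : ℝ) ^ (b - 1) ≠ 0 := (Real.rpow_pos_of_pos h1x _).ne'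
    have hne2 : ((1 - x) : ℝ) ^ ((2:ℝ)) ≠ 0 := (Real.rpow_pos_of_pos h1x _).ne'
    have key : ((1 - x) : ℝ) ^ (-b) = (1 - x) / ((1 - x) ^ 2 * (1 - x) ^ (b - 1)) := by
      rw [h2, ← Real.rpow_add h1x, show -b = 1 - (2 + (b - 1)) by ring,
        Real.rpow_sub h1x, Real.rpow_one]
    rw [smul_eq_mul, abs_of_nonneg (by positivity), e1, inv_inv,
      Real.div_rpow hx0.le h1x.le, key]
    field_simp
  rw [setIntegral_congr_fun measurableSet_Ioo this, beta_step hb0 hb1,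
    Real.Gamma_mul_Gamma_one_sub]

lemma key_integral {a : ℝ} (ha : 1 < a) :
    ∫ x in Ioi (0:ℝ), (1 + x ^ a)⁻¹ = Real.pi / (a * Real.sin (Real.pi / a)) := by
  have ha0 : 0 < a := by linarith
  set b : ℝ := 1 / a with hb
  have hb0 : 0 < b := by positivity
  have hb1 : b < 1 := by rw [hb, div_lt_one ha0]; linarith
  have hcomp := integral_comp_rpow_Ioi_of_pos
    (g := fun y : ℝ => a⁻¹ * (y ^ (b - 1) * (1 + y)⁻¹)) ha0
  have heq : ∀ x ∈ Ioi (0:ℝ), (a * x ^ (a - 1)) •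
      (a⁻¹ * ((x ^ a) ^ (b - 1) * (1 + x ^ a)⁻¹)) = (1 + x ^ a)⁻¹ := by
    intro x hx
    have hx0 : (0:ℝ) < x := hx
    have hab : a * (b - 1) = -(a - 1) := by
      rw [hb]; field_simp; ring
    have hne : x ^ (a - 1) ≠ 0 := (Real.rpow_pos_of_pos hx0 _).ne'
    have hne2 : (1:ℝ) + x ^ a ≠ 0 := by
      have : (0:ℝ) ≤ x ^ a := Real.rpow_nonneg hx0.le _
      positivity
    rw [smul_eq_mul, ← Real.rpow_mul hx0.le, hab, Real.rpow_neg hx0.le]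
    field_simp
  rw [setIntegral_congr_fun measurableSet_Ioi heq] at hcomp
  rw [hcomp, MeasureTheory.integral_const_mul, mellin_step hb0 hb1]
  rw [hb]
  have hsin : Real.pi * (1 / a) = Real.pi / a := by ring
  rw [hsin]
  field_simp

lemma key_integral_scaled {a c : ℝ} (ha : 1 < a) (hc : 0 < c) :
    ∫ x in Ioi (0:ℝ), (1 + c * x ^ a)⁻¹ =
      c ^ (-(1/a)) * (Real.pi / (a * Real.sin (Real.pi / a))) := by
  have ha0 : 0 < a := by linarith
  set bb : ℝ := c ^ (1/a) with hbbdef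
  have hbb : 0 < bb := Real.rpow_pos_of_pos hc _
  have hthis := integral_comp_mul_left_Ioi (fun y : ℝ => (1 + y ^ a)⁻¹) 0 hbb
  rw [mul_zero] at hthis
  have heq : ∀ x ∈ Ioi (0:ℝ), (fun y : ℝ => (1 + y ^ a)⁻¹) (bb * x) =
      (1 + c * x ^ a)⁻¹ := by
    intro x hx
    have hx0 : (0:ℝ) < x := hx
    simp only
    rw [Real.mul_rpow hbb.le hx0.le, hbbdef, ← Real.rpow_mul hc.le,
      one_div, inv_mul_cancel₀ ha0.ne', Real.rpow_one]
  rw [setIntegral_congr_fun measurableSet_Ioi heq] at hthis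
  rw [hthis, key_integral ha, smul_eq_mul, hbbdef, ← Real.rpow_neg hc.le]

lemma key_integrable {a c : ℝ} (ha : 1 < a) (hc : 0 < c) :
    IntegrableOn (fun x : ℝ => (1 + c * x ^ a)⁻¹) (Ioi 0) := by
  have ha0 : 0 < a := by linarith
  have hcont : ContinuousOn (fun x : ℝ => (1 + c * x ^ a)⁻¹) (Ici 0) := by
    have h1 : Continuous fun x : ℝ => 1 + c * x ^ a :=
      continuous_const.add (continuous_const.mul
        (continuous_iff_continuousAt.mpr fun x =>
          Real.continuousAt_rpow_const x a (Or.inr ha0.le)))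
    refine h1.continuousOn.inv₀ fun x hx => ?_
    have : (0:ℝ) ≤ x ^ a := Real.rpow_nonneg hx _
    positivity
  have hI1 : IntegrableOn (fun x : ℝ => (1 + c * x ^ a)⁻¹) (Ioc 0 1) :=
    ((hcont.mono (Set.Icc_subset_Ici_self : Icc (0:ℝ) 1 ⊆ Ici 0)).integrableOn_compact
      isCompact_Icc).mono_set Ioc_subset_Icc_self
  have hI2 : IntegrableOn (fun x : ℝ => (1 + c * x ^ a)⁻¹) (Ioi 1) := by
    refine Integrable.mono'
      ((integrableOn_Ioi_rpow_of_lt (show -a < -1 by linarith) one_pos).const_mul c⁻¹)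
      ((hcont.mono fun x (hx : x ∈ Ioi 1) => le_of_lt (by exact lt_trans one_pos (mem_Ioi.mp hx))).aestronglyMeasurable
        measurableSet_Ioi) ?_
    refine (ae_restrict_iff' measurableSet_Ioi).mpr (ae_of_all _ fun x hx => ?_)
    have hx0 : (0:ℝ) < x := lt_trans one_pos hx
    have hxa : (0:ℝ) < x ^ a := Real.rpow_pos_of_pos hx0 _
    have h1 : (0:ℝ) < 1 + c * x ^ a := by positivity
    rw [Real.norm_eq_abs, abs_of_nonneg (inv_nonneg.mpr h1.le), Real.rpow_neg hx0.le,
      ← mul_inv]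
    exact inv_anti₀ (by positivity) (by linarith)
  have := hI1.union hI2
  rwa [Ioc_union_Ioi_eq_Ioi (zero_le_one)] at this

lemma sub_preimage_Ioi (t : ℝ) : (fun s : ℝ => t - s) ⁻¹' (Ioi 0) = Iio t := by
  ext x; simp [sub_pos]

lemma integrableOn_Iic_comp_sub_iff {E : Type*} [NormedAddCommGroup E] (g : ℝ → E) (t : ℝ) :
    IntegrableOn (fun s => g (t - s)) (Iic t) ↔ IntegrableOn g (Ioi 0) := by
  have hmp := Measure.measurePreserving_sub_left (volume : Measure ℝ) t
  have hemb : MeasurableEmbedding (fun s : ℝ => t - s) :=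
    (MeasurableEquiv.subLeft t).measurableEmbedding
  have h := hmp.integrableOn_comp_preimage hemb (f := g) (s := Ioi 0)
  rw [sub_preimage_Ioi] at h
  rw [integrableOn_Iic_iff_integrableOn_Iio, ← h]
  rfl

lemma integral_Iic_comp_sub {E : Type*} [NormedAddCommGroup E] [NormedSpace ℝ E]
    (g : ℝ → E) (t : ℝ) :
    ∫ s in Iic t, g (t - s) = ∫ x in Ioi (0:ℝ), g x := by
  have hmp := Measure.measurePreserving_sub_left (volume : Measure ℝ) t
  have hemb : MeasurableEmbedding (fun s : ℝ => t - s) :=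
    (MeasurableEquiv.subLeft t).measurableEmbedding
  have h := hmp.setIntegral_preimage_emb hemb g (Ioi 0)
  rw [sub_preimage_Ioi] at h
  rw [integral_Iic_eq_integral_Iio, ← h]

lemma sm_apply_simple {X : Type*} [NormedAddCommGroup X]
    [NormedSpace ℝ X] (T : ℝ → X →L[ℝ] X) (hT : ∀ x : X, Continuous fun s => T s x)
    (φ : MeasureTheory.SimpleFunc ℝ X) :
    MeasureTheory.StronglyMeasurable (fun s => T s (φ s)) := by
  induction φ using MeasureTheory.SimpleFunc.induction with
  | const c hs =>
    rename_i E
    have heq : (fun s => T s ((MeasureTheory.SimpleFunc.piecewise E hs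
        (MeasureTheory.SimpleFunc.const ℝ c) (MeasureTheory.SimpleFunc.const ℝ 0)) s)) =
        fun s => Set.indicator E (fun s' => T s' c) s := by
      funext s
      rw [MeasureTheory.SimpleFunc.coe_piecewise]
      by_cases h : s ∈ E
      · simp [Set.piecewise, h, Set.indicator_of_mem h]
      · simp [Set.piecewise, h, Set.indicator_of_notMem h]
    rw [heq]
    exact ((hT c).stronglyMeasurable).indicator hs
  | add hdisj hf hg =>
    simp only [MeasureTheory.SimpleFunc.coe_add, Pi.add_apply, map_add]
    exact hf.add hg

lemma stronglyMeasurable_apply_of_stronglyContinuous {X : Type*} [NormedAddCommGroup X]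
    [NormedSpace ℝ X] (T : ℝ → X →L[ℝ] X) (hT : ∀ x : X, Continuous fun s => T s x)
    {z : ℝ → X} (hz : MeasureTheory.StronglyMeasurable z) :
    MeasureTheory.StronglyMeasurable (fun s => T s (z s)) := by
  refine stronglyMeasurable_of_tendsto (u := Filter.atTop)
    (f := fun n s => T s (hz.approx n s)) (fun n => sm_apply_simple T hT _) ?_
  exact tendsto_pi_nhds.mpr fun s =>
    ((T s).continuous.continuousAt.tendsto.comp (hz.tendsto_approx s))

lemma aesm_apply_of_stronglyContinuous {X : Type*} [NormedAddCommGroup X]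
    [NormedSpace ℝ X] (T : ℝ → X →L[ℝ] X) (hT : ∀ x : X, Continuous fun s => T s x)
    {z : ℝ → X} {μ : Measure ℝ} (hz : AEStronglyMeasurable z μ) :
    AEStronglyMeasurable (fun s => T s (z s)) μ := by
  refine ⟨fun s => T s (hz.mk z s),
    stronglyMeasurable_apply_of_stronglyContinuous T hT hz.stronglyMeasurable_mk, ?_⟩
  filter_upwards [hz.ae_eq_mk] with s hs
  rw [hs]

theorem stmt_5 {X : Type*} [NormedAddCommGroup X] [NormedSpace ℝ X] [CompleteSpace X]
    (S : ℝ → X →L[ℝ] X) (C M ω α : ℝ) (hC : 0 < C) (hM : 0 < M) (hω : ω < 0)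
    (hα1 : 1 < α) (hα2 : α < 2)
    (hS : ∀ t : ℝ, 0 ≤ t → ‖S t‖ ≤ C * M / (1 + |ω| * t ^ α))
    (hScont : ∀ x : X, Continuous fun t => S t x)
    (k : ℝ → ℝ) (hk : IntegrableOn k (Ici 0))
    (f : ℝ → X → X → X) (L : ℝ) (hL : 0 < L)
    (hf : Continuous fun p : ℝ × X × X => f p.1 p.2.1 p.2.2)
    (hLip : ∀ t u v φ ψ, ‖f t u φ - f t v ψ‖ ≤ L * (‖u - v‖ + ‖φ - ψ‖))
    (u v : ℝ → X) (hu : Continuous u) (hv : Continuous v)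
    (Bu : ℝ) (hBu : ∀ t, ‖u t‖ ≤ Bu) (Bv : ℝ) (hBv : ∀ t, ‖v t‖ ≤ Bv)
    (Ku Kv : ℝ → X)
    (hKu : ∀ t, Ku t = ∫ s in Iic t, k (t - s) • u s)
    (hKv : ∀ t, Kv t = ∫ s in Iic t, k (t - s) • v s)
    (t : ℝ) :
    ‖(∫ s in Iic t, S (t - s) (f s (u s) (Ku s))) -
        ∫ s in Iic t, S (t - s) (f s (v s) (Kv s))‖ ≤
      C * M * |ω| ^ (-(1/α)) * Real.pi / (α * Real.sin (Real.pi / α)) *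
        (L * (1 + ∫ s in Ici (0:ℝ), |k s|)) * ⨆ s : ℝ, ‖u s - v s‖ := by
  have hωpos : 0 < |ω| := abs_pos.mpr hω.ne
  set Ik : ℝ := ∫ s in Ici (0:ℝ), |k s| with hIkdef
  have hIk0 : 0 ≤ Ik := setIntegral_nonneg measurableSet_Ici fun x _ => abs_nonneg _
  set D : ℝ := ⨆ s : ℝ, ‖u s - v s‖ with hDdef
  have hbdd : BddAbove (range fun s => ‖u s - v s‖) := by
    refine ⟨Bu + Bv, ?_⟩
    rintro _ ⟨s, rfl⟩
    exact le_trans (norm_sub_le _ _) (add_le_add (hBu s) (hBv s))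
  have hD : ∀ s, ‖u s - v s‖ ≤ D := fun s => le_ciSup hbdd s
  have hD0 : 0 ≤ D := le_trans (norm_nonneg _) (hD 0)
  -- rewritten forms of Ku, Kv
  have hKu' : ∀ τ, Ku τ = ∫ x in Ioi (0:ℝ), k x • u (τ - x) := by
    intro τ
    rw [hKu τ, ← integral_Iic_comp_sub (fun x => k x • u (τ - x)) τ]
    refine setIntegral_congr_fun measurableSet_Iic fun s _ => ?_
    simp [sub_sub_cancel]
  have hKv' : ∀ τ, Kv τ = ∫ x in Ioi (0:ℝ), k x • v (τ - x) := by
    intro τ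
    rw [hKv τ, ← integral_Iic_comp_sub (fun x => k x • v (τ - x)) τ]
    refine setIntegral_congr_fun measurableSet_Iic fun s _ => ?_
    simp [sub_sub_cancel]
  have hkres : AEStronglyMeasurable k (volume.restrict (Ioi 0)) :=
    hk.1.mono_measure (Measure.restrict_mono Ioi_subset_Ici_self le_rfl)
  have hkabs : IntegrableOn (fun x => ‖k x‖) (Ioi 0) := IntegrableOn.mono_set (hk.norm) Ioi_subset_Ici_self
  -- Ku, Kv are a.e. strongly measurable
  have hKuAESM : AEStronglyMeasurable Ku volume := by
    have hkm : AEStronglyMeasurable (fun p : ℝ × ℝ => k p.2 • u (p.1 - p.2))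
        (volume.prod (volume.restrict (Ioi 0))) :=
      (hkres.comp_snd).smul ((hu.comp (continuous_fst.sub continuous_snd)).aestronglyMeasurable)
    exact (hkm.integral_prod_right').congr (Filter.Eventually.of_forall fun τ => (hKu' τ).symm)
  have hKvAESM : AEStronglyMeasurable Kv volume := by
    have hkm : AEStronglyMeasurable (fun p : ℝ × ℝ => k p.2 • v (p.1 - p.2))
        (volume.prod (volume.restrict (Ioi 0))) :=
      (hkres.comp_snd).smul ((hv.comp (continuous_fst.sub continuous_snd)).aestronglyMeasurable)
    exact (hkm.integral_prod_right').congr (Filter.Eventually.of_forall fun τ => (hKv' τ).symm)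
  -- integrability of the convolution integrands
  have hIu : ∀ τ, IntegrableOn (fun x => k x • u (τ - x)) (Ioi 0) := by
    intro τ
    refine Integrable.mono' (hkabs.mul_const Bu)
      (hkres.smul ((hu.comp (continuous_const.sub continuous_id)).aestronglyMeasurable)) ?_
    refine Filter.Eventually.of_forall fun x => ?_
    rw [norm_smul]
    exact mul_le_mul_of_nonneg_left (hBu _) (norm_nonneg _)
  have hIv : ∀ τ, IntegrableOn (fun x => k x • v (τ - x)) (Ioi 0) := by
    intro τ
    refine Integrable.mono' (hkabs.mul_const Bv)
      (hkres.smul ((hv.comp (continuous_const.sub continuous_id)).aestronglyMeasurable)) ?_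
    refine Filter.Eventually.of_forall fun x => ?_
    rw [norm_smul]
    exact mul_le_mul_of_nonneg_left (hBv _) (norm_nonneg _)
  -- bound on Ku - Kv
  have hKdiff : ∀ τ, ‖Ku τ - Kv τ‖ ≤ Ik * D := by
    intro τ
    rw [hKu' τ, hKv' τ, ← integral_sub (hIu τ) (hIv τ)]
    have hbI : Integrable (fun x => ‖k x‖ * D) (volume.restrict (Ioi 0)) := hkabs.mul_const D
    have hpt : ∀ x : ℝ, ‖k x • u (τ - x) - k x • v (τ - x)‖ ≤ ‖k x‖ * D := by
      intro x
      rw [← smul_sub, norm_smul]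
      exact mul_le_mul_of_nonneg_left (hD _) (norm_nonneg _)
    refine le_trans (norm_integral_le_of_norm_le hbI (Filter.Eventually.of_forall hpt)) ?_
    rw [integral_mul_const]
    have heqk : ∫ x in Ioi (0:ℝ), ‖k x‖ = Ik := by
      rw [hIkdef, integral_Ici_eq_integral_Ioi]
      rfl
    rw [heqk]
  -- bound on the difference of f values
  have hfd : ∀ s, ‖f s (u s) (Ku s) - f s (v s) (Kv s)‖ ≤ L * (1 + Ik) * D := by
    intro s
    refine le_trans (hLip s (u s) (v s) (Ku s) (Kv s)) ?_
    have : ‖u s - v s‖ + ‖Ku s - Kv s‖ ≤ D + Ik * D := add_le_add (hD s) (hKdiff s)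
    calc L * (‖u s - v s‖ + ‖Ku s - Kv s‖) ≤ L * (D + Ik * D) :=
          mul_le_mul_of_nonneg_left this hL.le
      _ = L * (1 + Ik) * D := by ring
  -- measurability of the integrands
  have hzu : AEStronglyMeasurable (fun s => f s (u s) (Ku s)) volume :=
    hf.comp_aestronglyMeasurable
      (aestronglyMeasurable_id.prodMk (hu.aestronglyMeasurable.prodMk hKuAESM))
  have hzv : AEStronglyMeasurable (fun s => f s (v s) (Kv s)) volume :=
    hf.comp_aestronglyMeasurable
      (aestronglyMeasurable_id.prodMk (hv.aestronglyMeasurable.prodMk hKvAESM))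
  have hTcont : ∀ x : X, Continuous fun s : ℝ => S (t - s) x := fun x =>
    (hScont x).comp (continuous_const.sub continuous_id)
  set Φ : ℝ → X := fun s => S (t - s) (f s (u s) (Ku s)) with hΦdef
  set Ψ : ℝ → X := fun s => S (t - s) (f s (v s) (Kv s)) with hΨdef
  have hΦaesm : AEStronglyMeasurable Φ (volume.restrict (Iic t)) :=
    (aesm_apply_of_stronglyContinuous (fun s => S (t - s)) hTcont hzu).restrict
  have hΨaesm : AEStronglyMeasurable Ψ (volume.restrict (Iic t)) :=
    (aesm_apply_of_stronglyContinuous (fun s => S (t - s)) hTcont hzv).restrict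
  -- the dominating function
  set c1 : ℝ := C * M * (L * (1 + Ik) * D) with hc1def
  set g₀ : ℝ → ℝ := fun s => (1 + |ω| * (t - s) ^ α)⁻¹ * c1 with hg₀def
  have hg₀int : IntegrableOn g₀ (Iic t) := by
    rw [hg₀def]
    have := (integrableOn_Iic_comp_sub_iff
      (fun x : ℝ => (1 + |ω| * x ^ α)⁻¹ * c1) t).mpr
      ((key_integrable hα1 hωpos).mul_const c1)
    exact this
  have hg₀bound : ∀ s ∈ Iic t, ‖Φ s - Ψ s‖ ≤ g₀ s := by
    intro s hs
    have hts : (0:ℝ) ≤ t - s := sub_nonneg.mpr hs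
    have hden : (0:ℝ) < 1 + |ω| * (t - s) ^ α := by
      have : (0:ℝ) ≤ (t - s) ^ α := Real.rpow_nonneg hts _
      positivity
    have h1 : Φ s - Ψ s = S (t - s) (f s (u s) (Ku s) - f s (v s) (Kv s)) := by
      rw [hΦdef, hΨdef, map_sub]
    rw [h1]
    refine le_trans ((S (t - s)).le_opNorm _) ?_
    have h2 : ‖S (t - s)‖ * ‖f s (u s) (Ku s) - f s (v s) (Kv s)‖ ≤
        (C * M / (1 + |ω| * (t - s) ^ α)) * (L * (1 + Ik) * D) := by
      refine mul_le_mul (hS (t - s) hts) (hfd s) (norm_nonneg _) ?_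
      positivity
    refine le_trans h2 (le_of_eq ?_)
    rw [hg₀def, hc1def]
    simp only
    field_simp
  have hsub_int : IntegrableOn (fun s => Φ s - Ψ s) (Iic t) := by
    refine Integrable.mono' hg₀int (hΦaesm.sub hΨaesm) ?_
    exact (ae_restrict_iff' measurableSet_Iic).mpr (Filter.Eventually.of_forall hg₀bound)
  have hsin : 0 < Real.sin (Real.pi / α) := by
    refine Real.sin_pos_of_pos_of_lt_pi (by positivity) ?_
    exact div_lt_self Real.pi_pos hα1
  have hint_g₀ : ∫ s in Iic t, g₀ s =
      |ω| ^ (-(1/α)) * (Real.pi / (α * Real.sin (Real.pi / α))) * c1 := by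
    rw [hg₀def]
    have := integral_Iic_comp_sub (fun x : ℝ => (1 + |ω| * x ^ α)⁻¹ * c1) t
    rw [this, integral_mul_const, key_integral_scaled hα1 hωpos]
  by_cases hΦint : IntegrableOn Φ (Iic t)
  · have hΨint : IntegrableOn Ψ (Iic t) := by
      have h2 := hΦint.sub hsub_int
      exact h2.congr (Filter.Eventually.of_forall fun s => by
        simp [Pi.sub_apply, sub_sub_cancel])
    rw [← integral_sub hΦint hΨint]
    refine le_trans (norm_integral_le_of_norm_le hg₀int
      ((ae_restrict_iff' measurableSet_Iic).mpr (Filter.Eventually.of_forall hg₀bound))) ?_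
    rw [hint_g₀, hc1def]
    apply le_of_eq
    ring
  · have hΨint : ¬ IntegrableOn Ψ (Iic t) := by
      intro hΨint
      apply hΦint
      have h2 := hΨint.add hsub_int
      exact h2.congr (Filter.Eventually.of_forall fun s => by
        simp [Pi.add_apply, add_sub_cancel])
    rw [integral_undef hΦint, integral_undef hΨint, sub_zero, norm_zero]
    have h1 : 0 ≤ C * M * |ω| ^ (-(1/α)) * Real.pi / (α * Real.sin (Real.pi / α)) := by
      apply div_nonneg
      · positivity
      · positivity
    have h2 : 0 ≤ L * (1 + Ik) := by positivity
    exact mul_nonneg (mul_nonneg h1 h2) hD0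
end

section
/- If f : ℝ → X is continuous with ‖f(t)‖ → 0 as t → ∞, and S : [0,∞) → B(X) is strongly continuous with ‖S(t)‖ ≤ CM/(1+|ω|t^α) for C,M > 0, ω < 0, α ∈ (1,2), then the function t ↦ ∫_0^∞ S(s) f(t-s) ds also tends to 0 in norm as t → ∞. -/
open MeasureTheory Set Filter Topology

theorem stmt_13 {X : Type*} [NormedAddCommGroup X] [NormedSpace ℝ X] [CompleteSpace X]
    (S : ℝ → X →L[ℝ] X) (C M ω α : ℝ) (hC : 0 < C) (hM : 0 < M) (hω : ω < 0)
    (hα1 : 1 < α) (hα2 : α < 2)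
    (hS : ∀ t : ℝ, 0 ≤ t → ‖S t‖ ≤ C * M / (1 + |ω| * t ^ α))
    (hScont : ∀ x : X, Continuous fun t => S t x)
    (f : ℝ → X) (hf : Continuous f) (B : ℝ) (hfb : ∀ t, ‖f t‖ ≤ B)
    (hf0 : Tendsto (fun t => ‖f t‖) atTop (nhds 0)) :
    Tendsto (fun t => ‖∫ s in Ioi (0:ℝ), S s (f (t - s))‖) atTop (nhds 0) := by
  have hB : 0 ≤ B := le_trans (norm_nonneg _) (hfb 0)
  have hω0 : (0:ℝ) < |ω| := abs_pos.mpr hω.ne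
  set g : ℝ → ℝ := fun s => C * M / (1 + |ω| * s ^ α) with hg
  have hden : ∀ s : ℝ, 0 ≤ s → (1:ℝ) ≤ 1 + |ω| * s ^ α := by
    intro s hs
    have h1 : (0:ℝ) ≤ s ^ α := Real.rpow_nonneg hs α
    nlinarith [abs_nonneg ω]
  have hSb : ∀ s : ℝ, 0 ≤ s → ‖S s‖ ≤ C * M := by
    intro s hs
    exact (hS s hs).trans (div_le_self (by positivity) (hden s hs))
  -- measurability of g
  have hgmeas : Measurable g := by
    apply Measurable.div measurable_const
    exact measurable_const.add (measurable_const.mul (measurable_id.pow_const α))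
  -- integrability of g on Ioi 0
  have hint : IntegrableOn g (Ioi (0:ℝ)) := by
    have hsplit : Ioi (0:ℝ) = Ioc (0:ℝ) 1 ∪ Ioi 1 := (Ioc_union_Ioi_eq_Ioi zero_le_one).symm
    rw [hsplit]
    apply IntegrableOn.union
    · apply Measure.integrableOn_of_bounded (M := C * M) (by simp) hgmeas.aestronglyMeasurable
      filter_upwards [ae_restrict_mem measurableSet_Ioc] with s hs
      have hs0 : (0:ℝ) ≤ s := hs.1.le
      have h1 := hden s hs0
      rw [Real.norm_eq_abs, abs_of_nonneg (by positivity)]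
      exact div_le_self (by positivity) h1
    · have hint2 : IntegrableOn (fun s : ℝ => C * M / |ω| * s ^ (-α)) (Ioi 1) :=
        (integrableOn_Ioi_rpow_of_lt (by linarith) one_pos).const_mul _
      apply hint2.mono' hgmeas.aestronglyMeasurable
      filter_upwards [ae_restrict_mem measurableSet_Ioi] with s hs
      have hs1 : (1:ℝ) < s := hs
      have hs0 : (0:ℝ) < s := lt_trans one_pos hs1
      have hsa : (0:ℝ) < s ^ α := Real.rpow_pos_of_pos hs0 α
      have h1 := hden s hs0.le
      rw [Real.norm_eq_abs, abs_of_nonneg (by positivity)]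
      have heq : C * M / |ω| * s ^ (-α) = C * M / (|ω| * s ^ α) := by
        rw [Real.rpow_neg hs0.le]; field_simp
      rw [heq]
      exact div_le_div_of_nonneg_left (by positivity) (by positivity) (by nlinarith)
  -- continuity of integrand in s on Ioi 0
  have hcontOn : ∀ t : ℝ, ContinuousOn (fun s => S s (f (t - s))) (Ioi (0:ℝ)) := by
    intro t s₀ hs₀
    have h1 : Tendsto (fun s => S s (f (t - s₀))) (𝓝[Ioi 0] s₀) (𝓝 (S s₀ (f (t - s₀)))) :=
      ((hScont (f (t - s₀))).tendsto s₀).mono_left nhdsWithin_le_nhds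
    have hfc : Continuous fun s : ℝ => f (t - s) - f (t - s₀) :=
      (hf.comp (continuous_const.sub continuous_id)).sub continuous_const
    have h2 : Tendsto (fun s => S s (f (t - s)) - S s (f (t - s₀))) (𝓝[Ioi 0] s₀) (𝓝 0) := by
      apply squeeze_zero_norm' (a := fun s => C * M * ‖f (t - s) - f (t - s₀)‖)
      · filter_upwards [self_mem_nhdsWithin] with s hs
        calc ‖S s (f (t - s)) - S s (f (t - s₀))‖ = ‖S s (f (t - s) - f (t - s₀))‖ := by
              rw [map_sub]
          _ ≤ ‖S s‖ * ‖f (t - s) - f (t - s₀)‖ := (S s).le_opNorm _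
          _ ≤ C * M * ‖f (t - s) - f (t - s₀)‖ :=
              mul_le_mul_of_nonneg_right (hSb s (le_of_lt hs)) (norm_nonneg _)
      · have : Tendsto (fun s => C * M * ‖f (t - s) - f (t - s₀)‖) (𝓝 s₀) (𝓝 (C * M * ‖f (t - s₀) - f (t - s₀)‖)) :=
          (tendsto_const_nhds.mul ((hfc.tendsto s₀).norm))
        simpa using this.mono_left nhdsWithin_le_nhds
    have := h1.add h2
    simp only [add_zero] at this
    show Tendsto _ _ _
    convert this using 2 with s
    abel
  -- dominated convergence
  have key : Tendsto (fun t => ∫ s in Ioi (0:ℝ), S s (f (t - s))) atTop (𝓝 0) := by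
    have h0 : (0:X) = ∫ _ in Ioi (0:ℝ), (0:X) := by simp
    rw [h0]
    apply tendsto_integral_filter_of_dominated_convergence (bound := fun s => B * g s)
    · filter_upwards with t
      exact (hcontOn t).aestronglyMeasurable measurableSet_Ioi
    · filter_upwards with t
      filter_upwards [ae_restrict_mem measurableSet_Ioi] with s hs
      calc ‖S s (f (t - s))‖ ≤ ‖S s‖ * ‖f (t - s)‖ := (S s).le_opNorm _
        _ ≤ g s * B := by
            apply mul_le_mul (hS s (le_of_lt hs)) (hfb _) (norm_nonneg _)
            have := hden s (le_of_lt hs)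
            positivity
        _ = B * g s := mul_comm _ _
    · exact hint.const_mul B
    · filter_upwards [ae_restrict_mem measurableSet_Ioi] with s _
      have hf0' : Tendsto f atTop (𝓝 0) := tendsto_zero_iff_norm_tendsto_zero.mpr hf0
      have hts : Tendsto (fun t : ℝ => t - s) atTop atTop := tendsto_atTop_add_const_right _ (-s) tendsto_id
      have : Tendsto (fun t => f (t - s)) atTop (𝓝 0) := hf0'.comp hts
      have := ((S s).continuous.tendsto 0).comp this
      simpa [Function.comp_def] using this
  simpa using key.norm
end

section
/- Composition theorem (Lipschitz case): let f = f₁ + f₂ where f₁ : ℝ × X → X is almost automorphic in t uniformly on compact subsets of X and f₂ : ℝ × X → X is continuous with ‖f₂(t,x)‖ → 0 as t → ∞ uniformly for x in bounded sets, and assume f satisfies a global Lipschitz condition ‖f(t,u)-f(t,v)‖ ≤ L‖u-v‖. If u : ℝ → X is asymptotically almost automorphic (u = u₁ + u₂ with u₁ almost automorphic and u₂ → 0 at ∞), then t ↦ f(t, u(t)) is asymptotically almost automorphic, with almost automorphic part t ↦ f₁(t, u₁(t)). -/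
open MeasureTheory Set Filter

/-- A bounded continuous function is almost automorphic if every real sequence admits a
subsequence along which the translates converge pointwise, with the limit translating back. -/
def AlmostAutomorphic {X : Type*} [NormedAddCommGroup X] (f : ℝ → X) : Prop :=
  Continuous f ∧ (∃ C : ℝ, ∀ t, ‖f t‖ ≤ C) ∧
  ∀ s : ℕ → ℝ, ∃ (φ : ℕ → ℕ) (g : ℝ → X), StrictMono φ ∧
    (∀ t, Filter.Tendsto (fun k => f (t + s (φ k))) Filter.atTop (nhds (g t))) ∧
    (∀ t, Filter.Tendsto (fun k => g (t - s (φ k))) Filter.atTop (nhds (f t)))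

/-- `f : ℝ × X → X` is almost automorphic in `t` uniformly for `x` in compact subsets. -/
def AlmostAutomorphicUnif {X : Type*} [NormedAddCommGroup X] (f : ℝ → X → X) : Prop :=
  Continuous (fun p : ℝ × X => f p.1 p.2) ∧
  ∀ K : Set X, IsCompact K → ∀ s : ℕ → ℝ, ∃ (φ : ℕ → ℕ) (g : ℝ → X → X), StrictMono φ ∧
    (∀ t, ∀ x ∈ K, Filter.Tendsto (fun k => f (t + s (φ k)) x) Filter.atTop (nhds (g t x))) ∧
    (∀ t, ∀ x ∈ K, Filter.Tendsto (fun k => g (t - s (φ k)) x) Filter.atTop (nhds (f t x)))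

theorem stmt_15 {X : Type*} [NormedAddCommGroup X] [NormedSpace ℝ X] [CompleteSpace X]
    (f f₁ f₂ : ℝ → X → X) (hsum : ∀ t x, f t x = f₁ t x + f₂ t x)
    (hf₁ : AlmostAutomorphicUnif f₁)
    (hf₂c : Continuous (fun p : ℝ × X => f₂ p.1 p.2))
    (hf₂0 : ∀ B : Set X, Bornology.IsBounded B →
      ∀ ε > (0:ℝ), ∃ T : ℝ, ∀ t ≥ T, ∀ x ∈ B, ‖f₂ t x‖ < ε)
    (L : ℝ) (hL : 0 < L)
    (hLip : ∀ t u v, ‖f t u - f t v‖ ≤ L * ‖u - v‖)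
    (u u₁ u₂ : ℝ → X) (husum : ∀ t, u t = u₁ t + u₂ t)
    (hu₁ : AlmostAutomorphic u₁)
    (hu₂c : Continuous u₂) (hu₂0 : Tendsto (fun t => ‖u₂ t‖) atTop (nhds 0)) :
    AlmostAutomorphic (fun t => f₁ t (u₁ t)) ∧
    Continuous (fun t => f t (u t) - f₁ t (u₁ t)) ∧
    Tendsto (fun t => ‖f t (u t) - f₁ t (u₁ t)‖) atTop (nhds 0) := by
  obtain ⟨hu₁c, ⟨Cu, hCu⟩, hu₁aa⟩ := hu₁
  obtain ⟨hf₁c, hf₁aa⟩ := hf₁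
  -- f₁ inherits the Lipschitz condition
  have hf₁Lip : ∀ t x y, ‖f₁ t x - f₁ t y‖ ≤ L * ‖x - y‖ := by
    intro t x y
    have hev : ∀ ε > (0:ℝ), ∃ T : ℝ, ∀ r ≥ T, ‖f₁ r x - f₁ r y‖ ≤ L * ‖x - y‖ + ε := by
      intro ε hε
      obtain ⟨T, hT⟩ := hf₂0 {x, y} ((Set.toFinite ({x, y} : Set X)).isBounded)
        (ε/2) (by positivity)
      refine ⟨T, fun r hr => ?_⟩
      have e : f₁ r x - f₁ r y = (f r x - f r y) - (f₂ r x - f₂ r y) := by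
        rw [hsum r x, hsum r y]; abel
      calc ‖f₁ r x - f₁ r y‖ ≤ ‖f r x - f r y‖ + ‖f₂ r x - f₂ r y‖ := by
            rw [e]; exact norm_sub_le _ _
        _ ≤ L * ‖x - y‖ + (‖f₂ r x‖ + ‖f₂ r y‖) := by
            gcongr
            · exact hLip r x y
            · exact norm_sub_le _ _
        _ ≤ L * ‖x - y‖ + ε := by
            have h1 := hT r hr x (by simp)
            have h2 := hT r hr y (by simp)
            linarith
    obtain ⟨φ, g, hφ, hg1, hg2⟩ := hf₁aa {x, y}
      ((Set.toFinite ({x, y} : Set X)).isCompact) (fun n => (n : ℝ))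
    have hxK : x ∈ ({x, y} : Set X) := by simp
    have hyK : y ∈ ({x, y} : Set X) := by simp
    have hgb : ∀ r, ‖g r x - g r y‖ ≤ L * ‖x - y‖ := by
      intro r
      have hlim := ((hg1 r x hxK).sub (hg1 r y hyK)).norm
      refine le_of_forall_pos_le_add fun ε hε => ?_
      obtain ⟨T, hT⟩ := hev ε hε
      have htends : Tendsto (fun k => r + ((φ k : ℕ) : ℝ)) atTop atTop :=
        tendsto_atTop_add_const_left _ r
          (tendsto_natCast_atTop_atTop.comp hφ.tendsto_atTop)
      exact le_of_tendsto hlim ((htends.eventually_ge_atTop T).mono fun k hk => hT _ hk)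
    exact le_of_tendsto ((hg2 t x hxK).sub (hg2 t y hyK)).norm
      (Eventually.of_forall fun k => hgb _)
  -- f₁ (·, 0) is bounded
  have hbdd0 : ∃ C0 : ℝ, ∀ t, ‖f₁ t 0‖ ≤ C0 := by
    by_contra h
    push_neg at h
    choose t ht using fun n : ℕ => h n
    obtain ⟨φ, g, hφ, hg1, _⟩ := hf₁aa {0} isCompact_singleton t
    have hc : Tendsto (fun k => ‖f₁ (0 + t (φ k)) 0‖) atTop (nhds ‖g 0 0‖) :=
      (hg1 0 0 rfl).norm
    have hd : Tendsto (fun k => ‖f₁ (0 + t (φ k)) 0‖) atTop atTop := by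
      apply tendsto_atTop_mono (fun k => ?_) tendsto_natCast_atTop_atTop
      rw [zero_add]
      exact le_of_lt (lt_of_le_of_lt (Nat.cast_le.2 (hφ.id_le k)) (ht (φ k)))
    exact not_tendsto_atTop_of_tendsto_nhds hc hd
  obtain ⟨C0, hC0⟩ := hbdd0
  -- boundedness of t ↦ f₁ t (u₁ t)
  have hbdd : ∀ t, ‖f₁ t (u₁ t)‖ ≤ L * Cu + C0 := by
    intro t
    calc ‖f₁ t (u₁ t)‖ ≤ ‖f₁ t (u₁ t) - f₁ t 0‖ + ‖f₁ t 0‖ := by simpa using norm_add_le (f₁ t (u₁ t) - f₁ t 0) (f₁ t 0)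
      _ ≤ L * ‖u₁ t - 0‖ + C0 := add_le_add (hf₁Lip t _ 0) (hC0 t)
      _ ≤ L * Cu + C0 := by
          rw [sub_zero]
          exact add_le_add (mul_le_mul_of_nonneg_left (hCu t) hL.le) le_rfl
  -- compactness of the closure of the range of u₁
  have hK : IsCompact (closure (range u₁)) := by
    apply IsSeqCompact.isCompact
    intro y hy
    have hsel : ∀ n : ℕ, ∃ t : ℝ, dist (y n) (u₁ t) < 1 / ((n : ℝ) + 1) := by
      intro n
      obtain ⟨b, hb, hd⟩ := Metric.mem_closure_iff.1 (hy n) (1 / ((n : ℝ) + 1)) (by positivity)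
      obtain ⟨t, rfl⟩ := hb
      exact ⟨t, hd⟩
    choose t ht using hsel
    obtain ⟨φ, g, hφ, hg1, _⟩ := hu₁aa t
    have hlim : Tendsto (y ∘ φ) atTop (nhds (g 0)) := by
      rw [tendsto_iff_dist_tendsto_zero]
      apply squeeze_zero (fun k => dist_nonneg)
        (g := fun k => 1 / ((φ k : ℝ) + 1) + dist (u₁ (0 + t (φ k))) (g 0))
      · intro k
        calc dist (y (φ k)) (g 0) ≤ dist (y (φ k)) (u₁ (t (φ k))) + dist (u₁ (t (φ k))) (g 0) :=
              dist_triangle _ _ _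
          _ ≤ 1 / ((φ k : ℝ) + 1) + dist (u₁ (0 + t (φ k))) (g 0) := by
              rw [zero_add]; exact add_le_add (le_of_lt (ht (φ k))) le_rfl
      · have h1 : Tendsto (fun k : ℕ => 1 / ((φ k : ℝ) + 1)) atTop (nhds 0) := by
          apply squeeze_zero (fun k => by positivity) (g := fun k : ℕ => 1 / ((k : ℝ) + 1))
          · intro k
            gcongr
            exact_mod_cast hφ.id_le k
          · exact tendsto_one_div_add_atTop_nhds_zero_nat
        have h2 : Tendsto (fun k => dist (u₁ (0 + t (φ k))) (g 0)) atTop (nhds 0) :=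
          (tendsto_iff_dist_tendsto_zero).1 (hg1 0)
        simpa using h1.add h2
    exact ⟨g 0, isClosed_closure.mem_of_tendsto hlim
      (Eventually.of_forall fun k => hy (φ k)), φ, hφ, hlim⟩
  have hu₁K : ∀ t, u₁ t ∈ closure (range u₁) := fun t => subset_closure (mem_range_self t)
  -- continuity of t ↦ f₁ t (u₁ t)
  have hcont1 : Continuous (fun t => f₁ t (u₁ t)) :=
    hf₁c.comp (continuous_id.prodMk hu₁c)
  refine ⟨⟨hcont1, ⟨L * Cu + C0, hbdd⟩, ?_⟩, ?_, ?_⟩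
  · -- the almost automorphy property
    intro s
    obtain ⟨φ₁, v, hφ₁, hv1, hv2⟩ := hu₁aa s
    have hvK : ∀ t, v t ∈ closure (range u₁) := fun t =>
      isClosed_closure.mem_of_tendsto (hv1 t)
        (Eventually.of_forall fun k => subset_closure (mem_range_self _))
    obtain ⟨φ₂, g₁, hφ₂, hg1, hg2⟩ := hf₁aa _ hK (s ∘ φ₁)
    have hg₁Lip : ∀ r, ∀ x ∈ closure (range u₁), ∀ y ∈ closure (range u₁),
        ‖g₁ r x - g₁ r y‖ ≤ L * ‖x - y‖ := fun r x hx y hy =>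
      le_of_tendsto ((hg1 r x hx).sub (hg1 r y hy)).norm
        (Eventually.of_forall fun k => hf₁Lip _ _ _)
    refine ⟨φ₁ ∘ φ₂, fun t => g₁ t (v t), hφ₁.comp hφ₂, ?_, ?_⟩
    · intro t
      rw [tendsto_iff_norm_sub_tendsto_zero]
      apply squeeze_zero (fun k => norm_nonneg _)
        (g := fun k => L * ‖u₁ (t + s (φ₁ (φ₂ k))) - v t‖ +
          ‖f₁ (t + s (φ₁ (φ₂ k))) (v t) - g₁ t (v t)‖)
      · intro k
        calc ‖f₁ (t + s ((φ₁ ∘ φ₂) k)) (u₁ (t + s ((φ₁ ∘ φ₂) k))) - g₁ t (v t)‖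
            ≤ ‖f₁ (t + s (φ₁ (φ₂ k))) (u₁ (t + s (φ₁ (φ₂ k)))) - f₁ (t + s (φ₁ (φ₂ k))) (v t)‖ +
              ‖f₁ (t + s (φ₁ (φ₂ k))) (v t) - g₁ t (v t)‖ := by
              simpa [Function.comp] using norm_sub_le_norm_sub_add_norm_sub
                (f₁ (t + s (φ₁ (φ₂ k))) (u₁ (t + s (φ₁ (φ₂ k))))) (f₁ (t + s (φ₁ (φ₂ k))) (v t))
                (g₁ t (v t))
          _ ≤ L * ‖u₁ (t + s (φ₁ (φ₂ k))) - v t‖ +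
              ‖f₁ (t + s (φ₁ (φ₂ k))) (v t) - g₁ t (v t)‖ :=
              add_le_add (hf₁Lip _ _ _) le_rfl
      · have h1 : Tendsto (fun k => ‖u₁ (t + s (φ₁ (φ₂ k))) - v t‖) atTop (nhds 0) :=
          tendsto_iff_norm_sub_tendsto_zero.1 ((hv1 t).comp hφ₂.tendsto_atTop)
        have h2 : Tendsto (fun k => ‖f₁ (t + s (φ₁ (φ₂ k))) (v t) - g₁ t (v t)‖) atTop (nhds 0) :=
          tendsto_iff_norm_sub_tendsto_zero.1 (hg1 t (v t) (hvK t))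
        simpa using (h1.const_mul L).add h2
    · intro t
      rw [tendsto_iff_norm_sub_tendsto_zero]
      apply squeeze_zero (fun k => norm_nonneg _)
        (g := fun k => L * ‖v (t - s (φ₁ (φ₂ k))) - u₁ t‖ +
          ‖g₁ (t - s (φ₁ (φ₂ k))) (u₁ t) - f₁ t (u₁ t)‖)
      · intro k
        calc ‖g₁ (t - s ((φ₁ ∘ φ₂) k)) (v (t - s ((φ₁ ∘ φ₂) k))) - f₁ t (u₁ t)‖
            ≤ ‖g₁ (t - s (φ₁ (φ₂ k))) (v (t - s (φ₁ (φ₂ k)))) - g₁ (t - s (φ₁ (φ₂ k))) (u₁ t)‖ +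
              ‖g₁ (t - s (φ₁ (φ₂ k))) (u₁ t) - f₁ t (u₁ t)‖ := by
              simpa [Function.comp] using norm_sub_le_norm_sub_add_norm_sub
                (g₁ (t - s (φ₁ (φ₂ k))) (v (t - s (φ₁ (φ₂ k))))) (g₁ (t - s (φ₁ (φ₂ k))) (u₁ t))
                (f₁ t (u₁ t))
          _ ≤ L * ‖v (t - s (φ₁ (φ₂ k))) - u₁ t‖ +
              ‖g₁ (t - s (φ₁ (φ₂ k))) (u₁ t) - f₁ t (u₁ t)‖ :=
              add_le_add (hg₁Lip _ _ (hvK _) _ (hu₁K t)) le_rfl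
      · have h1 : Tendsto (fun k => ‖v (t - s (φ₁ (φ₂ k))) - u₁ t‖) atTop (nhds 0) :=
          tendsto_iff_norm_sub_tendsto_zero.1 ((hv2 t).comp hφ₂.tendsto_atTop)
        have h2 : Tendsto (fun k => ‖g₁ (t - s (φ₁ (φ₂ k))) (u₁ t) - f₁ t (u₁ t)‖)
            atTop (nhds 0) := tendsto_iff_norm_sub_tendsto_zero.1 (hg2 t (u₁ t) (hu₁K t))
        simpa using (h1.const_mul L).add h2
  · -- continuity of the remainder
    have hfc : Continuous (fun t => f t (u t)) := by
      have e : (fun t => f t (u t)) = fun t => f₁ t (u₁ t + u₂ t) + f₂ t (u₁ t + u₂ t) := by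
        funext t; rw [husum t, hsum]
      rw [e]
      exact (hf₁c.comp (continuous_id.prodMk (hu₁c.add hu₂c))).add
        (hf₂c.comp (continuous_id.prodMk (hu₁c.add hu₂c)))
    exact hfc.sub hcont1
  · -- decay of the remainder
    have key : ∀ t, ‖f t (u t) - f₁ t (u₁ t)‖ ≤ L * ‖u₂ t‖ + ‖f₂ t (u₁ t)‖ := by
      intro t
      have e : f t (u t) - f₁ t (u₁ t) = (f t (u t) - f t (u₁ t)) + f₂ t (u₁ t) := by
        rw [hsum t (u₁ t)]; abel
      have e2 : u t - u₁ t = u₂ t := by rw [husum t]; abel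
      calc ‖f t (u t) - f₁ t (u₁ t)‖ ≤ ‖f t (u t) - f t (u₁ t)‖ + ‖f₂ t (u₁ t)‖ := by
            rw [e]; exact norm_add_le _ _
        _ ≤ L * ‖u t - u₁ t‖ + ‖f₂ t (u₁ t)‖ := add_le_add (hLip t _ _) le_rfl
        _ = L * ‖u₂ t‖ + ‖f₂ t (u₁ t)‖ := by rw [e2]
    have h2 : Tendsto (fun t => ‖f₂ t (u₁ t)‖) atTop (nhds 0) := by
      rw [Metric.tendsto_nhds]
      intro ε hε
      obtain ⟨T, hT⟩ := hf₂0 (range u₁)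
        (isBounded_iff_forall_norm_le.2 ⟨Cu, by rintro x ⟨t, rfl⟩; exact hCu t⟩) ε hε
      filter_upwards [eventually_ge_atTop T] with t ht
      rw [Real.dist_eq, sub_zero, abs_of_nonneg (norm_nonneg _)]
      exact hT t ht _ (mem_range_self t)
    apply squeeze_zero (fun t => norm_nonneg _) key
    simpa using (hu₂0.const_mul L).add h2
end

section
/- Let S : [0,∞) → B(X) be strongly continuous with ‖S(t)‖ ≤ CM/(1+|ω|t^α), α ∈ (1,2), ω < 0. If f : ℝ → X is almost automorphic, then (Ff)(t) = ∫_{-∞}^t S(t-s) f(s) ds defines an almost automorphic function ℝ → X. -/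
open MeasureTheory Set Filter

private lemma aux_bound_integrable (c α : ℝ) (hc : 0 < c) (hα : 1 < α) :
    IntegrableOn (fun u : ℝ => 1 / (1 + c * u ^ α)) (Ici (0:ℝ)) := by
  have hαpos : (0:ℝ) ≤ α := by linarith
  have hcont : ContinuousOn (fun u : ℝ => 1 / (1 + c * u ^ α)) (Ici 0) := by
    apply ContinuousOn.div continuousOn_const
    · exact (continuousOn_const.add (continuousOn_const.mul
        ((Real.continuous_rpow_const hαpos).continuousOn)))
    · intro x hx
      have : (0:ℝ) ≤ x ^ α := Real.rpow_nonneg hx α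
      positivity
  have h1 : IntegrableOn (fun u : ℝ => 1 / (1 + c * u ^ α)) (Icc 0 1) :=
    (hcont.mono Icc_subset_Ici_self).integrableOn_compact isCompact_Icc
  have h2 : IntegrableOn (fun u : ℝ => 1 / (1 + c * u ^ α)) (Ioi 1) := by
    have hint : IntegrableOn (fun u : ℝ => c⁻¹ * u ^ (-α)) (Ioi 1) :=
      ((integrableOn_Ioi_rpow_iff zero_lt_one).2 (by linarith)).const_mul _
    refine Integrable.mono hint ((hcont.mono ?_).aestronglyMeasurable measurableSet_Ioi) ?_
    · exact fun x hx => le_of_lt (by simpa using lt_trans zero_lt_one (show (1:ℝ) < x from hx))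
    · filter_upwards [ae_restrict_mem measurableSet_Ioi] with x hx
      have hx1 : (1:ℝ) < x := hx
      have hx0 : (0:ℝ) < x := lt_trans zero_lt_one hx1
      have hxα : (0:ℝ) < x ^ α := Real.rpow_pos_of_pos hx0 α
      rw [Real.norm_eq_abs, Real.norm_eq_abs, abs_of_nonneg (by positivity),
        abs_of_nonneg (by positivity)]
      have h1 : 1/(1+c*x^α) ≤ 1/(c*x^α) := by
        apply one_div_le_one_div_of_le (by positivity); linarith
      calc 1/(1+c*x^α) ≤ 1/(c*x^α) := h1
        _ = c⁻¹ * x ^ (-α) := by rw [Real.rpow_neg hx0.le, one_div, mul_inv]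
  have : Ici (0:ℝ) ⊆ Icc 0 1 ∪ Ioi 1 := by
    intro x hx; rcases le_or_gt x 1 with h | h
    · exact Or.inl ⟨hx, h⟩
    · exact Or.inr h
  exact (h1.union h2).mono_set this

private lemma aux_contOn {X : Type*} [NormedAddCommGroup X] [NormedSpace ℝ X]
    (S : ℝ → X →L[ℝ] X) (K : ℝ)
    (hSb : ∀ u : ℝ, 0 ≤ u → ‖S u‖ ≤ K)
    (hScont : ∀ x : X, Continuous fun t => S t x)
    (h : ℝ → X) (hh : Continuous h) (t : ℝ) :
    ContinuousOn (fun u => S u (h (t - u))) (Ici (0:ℝ)) := by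
  intro u₀ hu₀
  set x₀ := h (t - u₀) with hx₀
  have hB : Tendsto (fun u => S u x₀) (nhdsWithin u₀ (Ici 0)) (nhds (S u₀ x₀)) :=
    ((hScont x₀).tendsto u₀).mono_left nhdsWithin_le_nhds
  have hA : Tendsto (fun u => S u (h (t - u) - x₀)) (nhdsWithin u₀ (Ici 0)) (nhds 0) := by
    have hbnd : ∀ᶠ u in nhdsWithin u₀ (Ici 0),
        ‖S u (h (t - u) - x₀)‖ ≤ K * ‖h (t - u) - x₀‖ := by
      filter_upwards [self_mem_nhdsWithin] with u hu
      calc ‖S u (h (t - u) - x₀)‖ ≤ ‖S u‖ * ‖h (t - u) - x₀‖ := (S u).le_opNorm _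
        _ ≤ K * ‖h (t - u) - x₀‖ := by
            apply mul_le_mul_of_nonneg_right (hSb u hu) (norm_nonneg _)
    have hlim : Tendsto (fun u => K * ‖h (t - u) - x₀‖) (nhdsWithin u₀ (Ici 0)) (nhds 0) := by
      have : Tendsto (fun u => h (t - u) - x₀) (nhds u₀) (nhds 0) := by
        have h2 : Continuous fun u : ℝ => h (t - u) :=
          hh.comp (continuous_const.sub continuous_id)
        simpa [hx₀] using (h2.tendsto u₀).sub_const x₀
      simpa using (this.norm.const_mul K).mono_left nhdsWithin_le_nhds
    exact squeeze_zero_norm' hbnd hlim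
  have : Tendsto (fun u => S u (h (t - u) - x₀) + S u x₀) (nhdsWithin u₀ (Ici 0))
      (nhds (0 + S u₀ x₀)) := hA.add hB
  simpa [ContinuousWithinAt] using this

theorem stmt_16 {X : Type*} [NormedAddCommGroup X] [NormedSpace ℝ X] [CompleteSpace X]
    (S : ℝ → X →L[ℝ] X) (C M ω α : ℝ) (hC : 0 < C) (hM : 0 < M) (hω : ω < 0)
    (hα1 : 1 < α) (hα2 : α < 2)
    (hS : ∀ t : ℝ, 0 ≤ t → ‖S t‖ ≤ C * M / (1 + |ω| * t ^ α))
    (hScont : ∀ x : X, Continuous fun t => S t x)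
    (f : ℝ → X) (hf : AlmostAutomorphic f) :
    AlmostAutomorphic (fun t => ∫ s in Iic t, S (t - s) (f s)) := by
  obtain ⟨hfc, ⟨Cf, hCf⟩, hseq⟩ := hf
  have hCf0 : 0 ≤ Cf := le_trans (norm_nonneg _) (hCf 0)
  have hωpos : (0:ℝ) < |ω| := abs_pos.2 hω.ne
  set D : ℝ → ℝ := fun u => 1 + |ω| * u ^ α with hD
  have hD1 : ∀ u : ℝ, 0 ≤ u → 1 ≤ D u := by
    intro u hu
    have h1 : (0:ℝ) ≤ u ^ α := Real.rpow_nonneg hu α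
    have := mul_nonneg hωpos.le h1
    simp only [hD]; linarith
  have hDpos : ∀ u : ℝ, 0 ≤ u → 0 < D u := fun u hu => lt_of_lt_of_le one_pos (hD1 u hu)
  have hSb : ∀ u : ℝ, 0 ≤ u → ‖S u‖ ≤ C * M := by
    intro u hu
    exact (hS u hu).trans (div_le_self (by positivity) (hD1 u hu))
  set K : ℝ := C * M * Cf with hK
  -- integrability of the bound
  have hbound_int : IntegrableOn (fun u : ℝ => K / D u) (Ici 0) := by
    have := (aux_bound_integrable |ω| α hωpos hα1).const_mul K
    simpa [mul_one_div, hD, div_eq_mul_inv, IntegrableOn] using this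
  -- pointwise bound
  have hptbound : ∀ (h : ℝ → X), (∀ x, ‖h x‖ ≤ Cf) → ∀ τ : ℝ, ∀ u : ℝ, 0 ≤ u →
      ‖S u (h (τ - u))‖ ≤ K / D u := by
    intro h hh τ u hu
    calc ‖S u (h (τ - u))‖ ≤ ‖S u‖ * ‖h (τ - u)‖ := (S u).le_opNorm _
      _ ≤ (C * M / D u) * Cf := by
          exact mul_le_mul (hS u hu) (hh _) (norm_nonneg _)
            (div_nonneg (by positivity) (hDpos u hu).le)
      _ = K / D u := by rw [div_mul_eq_mul_div]
  -- measurability of integrands with continuous h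
  have hmeas_f : ∀ τ : ℝ, AEStronglyMeasurable (fun u => S u (f (τ - u)))
      (volume.restrict (Ici 0)) := fun τ =>
    (aux_contOn S (C * M) hSb hScont f hfc τ).aestronglyMeasurable measurableSet_Ici
  -- change of variables
  have hchg : ∀ t : ℝ, (∫ s in Iic t, S (t - s) (f s)) = ∫ u in Ici (0:ℝ), S u (f (t - u)) := by
    intro t
    have hmp : MeasurePreserving (fun u : ℝ => t - u) volume volume :=
      Measure.measurePreserving_sub_left volume t
    have hemb : MeasurableEmbedding (fun u : ℝ => t - u) :=
      (MeasurableEquiv.subLeft t).measurableEmbedding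
    have hpre : (fun u : ℝ => t - u) ⁻¹' (Iic t) = Ici 0 := by
      ext x; simp [sub_le_iff_le_add]
    rw [← hmp.setIntegral_preimage_emb hemb (fun s => S (t - s) (f s)) (Iic t), hpre]
    congr 1
    funext u
    congr 1
    ring
  have hGeq : (fun t => ∫ s in Iic t, S (t - s) (f s))
      = fun t => ∫ u in Ici (0:ℝ), S u (f (t - u)) := funext hchg
  rw [hGeq]
  set G : ℝ → X := fun t => ∫ u in Ici (0:ℝ), S u (f (t - u)) with hGdef
  refine ⟨?_, ⟨∫ u in Ici (0:ℝ), K / D u, ?_⟩, ?_⟩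
  · -- continuity
    rw [continuous_iff_continuousAt]
    intro t₀
    refine tendsto_integral_filter_of_dominated_convergence (fun u => K / D u)
      (Eventually.of_forall fun t => hmeas_f t) ?_ hbound_int ?_
    · refine Eventually.of_forall fun t => ?_
      filter_upwards [ae_restrict_mem measurableSet_Ici] with u hu
      exact hptbound f hCf t u hu
    · filter_upwards [ae_restrict_mem measurableSet_Ici] with u _
      have hc : Continuous fun t : ℝ => S u (f (t - u)) :=
        (S u).continuous.comp (hfc.comp (continuous_id.sub continuous_const))
      exact hc.tendsto t₀
  · -- boundedness
    intro t
    refine norm_integral_le_of_norm_le hbound_int ?_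
    filter_upwards [ae_restrict_mem measurableSet_Ici] with u hu
    exact hptbound f hCf t u hu
  · -- sequence property
    intro s
    obtain ⟨φ, g, hφ, hg1, hg2⟩ := hseq s
    have hgb : ∀ x, ‖g x‖ ≤ Cf := fun x =>
      le_of_tendsto (hg1 x).norm (Eventually.of_forall fun k => hCf _)
    have hmeas_g : ∀ τ : ℝ, AEStronglyMeasurable (fun u => S u (g (τ - u)))
        (volume.restrict (Ici 0)) := by
      intro τ
      refine aestronglyMeasurable_of_tendsto_ae atTop
        (f := fun k u => S u (f (τ + s (φ k) - u))) (fun k => hmeas_f (τ + s (φ k))) ?_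
      refine Eventually.of_forall fun u => ?_
      have := ((S u).continuous.tendsto (g (τ - u))).comp (hg1 (τ - u))
      exact this.congr fun k => by simp only [Function.comp_apply]; congr 2; ring
    refine ⟨φ, fun τ => ∫ u in Ici (0:ℝ), S u (g (τ - u)), hφ, ?_, ?_⟩
    · intro t
      refine tendsto_integral_of_dominated_convergence (fun u => K / D u)
        (fun k => hmeas_f (t + s (φ k))) hbound_int ?_ ?_
      · intro k
        filter_upwards [ae_restrict_mem measurableSet_Ici] with u hu
        exact hptbound f hCf (t + s (φ k)) u hu
      · filter_upwards [ae_restrict_mem measurableSet_Ici] with u _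
        have := ((S u).continuous.tendsto (g (t - u))).comp (hg1 (t - u))
        exact this.congr fun k => by simp only [Function.comp_apply]; congr 2; ring
    · intro t
      refine tendsto_integral_of_dominated_convergence (fun u => K / D u)
        (fun k => hmeas_g (t - s (φ k))) hbound_int ?_ ?_
      · intro k
        filter_upwards [ae_restrict_mem measurableSet_Ici] with u hu
        exact hptbound g hgb (t - s (φ k)) u hu
      · filter_upwards [ae_restrict_mem measurableSet_Ici] with u _
        have := ((S u).continuous.tendsto (f (t - u))).comp (hg2 (t - u))
        exact this.congr fun k => by simp only [Function.comp_apply]; congr 2; ring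
end
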